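/- Let n ≥ 2, let ν be a positive measure on ℝ and W : ℝ → (p×p complex matrices) a measurable function with W(t) positive semidefinite ν-a.e. and ∫_ℝ (1 + |t|^{2n−2})‖W(t)‖ dν(t) < ∞. Let H_0, …, H_{2n−3} be p×p matrices with ∫_ℝ t^k W(t) dν(t) = H_k for 0 ≤ k ≤ 2n−3, and define φ(z) := ∫_ℝ (t − z)^{−1} W(t) dν(t) for z in the open upper half-plane. Then for every δ > 0 there exist constants C > 0 and r > 0 such that for all z with Im z ≥ δ|z| and |z| ≥ r one has ‖φ(z) + Σ_{k=0}^{2n−3} z^{−(k+1)} H_k‖ ≤ C |z|^{−(2n−1)}; that is, φ(z) = −Σ_{k=0}^{2n−3} z^{−(k+1)} H_k + O(z^{−(2n−1)}) as z tends non-tangentially to infinity in ℂ₊. -/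

import Mathlib

open Matrix MeasureTheory Filter
open scoped ComplexOrder

lemma coord_le_norm {p : ℕ} (x : EuclideanSpace ℂ (Fin p)) (j : Fin p) : ‖x j‖ ≤ ‖x‖ := by
  have h := norm_inner_le_norm (𝕜 := ℂ) (EuclideanSpace.single j (1:ℂ)) x
  simpa [EuclideanSpace.inner_single_left, EuclideanSpace.norm_single] using h

lemma clm_apply_eq {p : ℕ} (M : Matrix (Fin p) (Fin p) ℂ) (x : EuclideanSpace ℂ (Fin p))
    (i : Fin p) : (Matrix.toEuclideanCLM (𝕜 := ℂ) M x) i = M.mulVec x i := rfl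

lemma entry_le_opNorm {p : ℕ} (M : Matrix (Fin p) (Fin p) ℂ) (i j : Fin p) :
    ‖M i j‖ ≤ ‖Matrix.toEuclideanCLM (𝕜 := ℂ) M‖ := by
  have h1 : M i j = (Matrix.toEuclideanCLM (𝕜 := ℂ) M (EuclideanSpace.single j (1:ℂ))) i := by
    rw [clm_apply_eq]
    simp [Matrix.mulVec, dotProduct, EuclideanSpace.single_apply]
  rw [h1]
  refine (coord_le_norm _ i).trans ?_
  calc ‖_‖ ≤ ‖Matrix.toEuclideanCLM (𝕜 := ℂ) M‖ * ‖EuclideanSpace.single j (1:ℂ)‖ :=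
        ContinuousLinearMap.le_opNorm _ _
    _ = _ := by rw [EuclideanSpace.norm_single, norm_one, mul_one]

lemma opNorm_le_sum_entries {p : ℕ} (M : Matrix (Fin p) (Fin p) ℂ) :
    ‖Matrix.toEuclideanCLM (𝕜 := ℂ) M‖ ≤ ∑ i, ∑ j, ‖M i j‖ := by
  conv_lhs => rw [Matrix.matrix_eq_sum_single M]
  rw [map_sum]
  refine (norm_sum_le _ _).trans (Finset.sum_le_sum fun i _ => ?_)
  rw [map_sum]
  refine (norm_sum_le _ _).trans (Finset.sum_le_sum fun j _ => ?_)
  refine ContinuousLinearMap.opNorm_le_bound _ (norm_nonneg _) fun x => ?_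
  have hx : Matrix.toEuclideanCLM (𝕜 := ℂ) (Matrix.single i j (M i j)) x =
      EuclideanSpace.single i (M i j * x j) := by
    ext k
    rw [clm_apply_eq]
    simp [Matrix.mulVec, dotProduct, Matrix.single, EuclideanSpace.single_apply,
      Finset.sum_ite_eq, ite_and]
    by_cases h : i = k
    · simp [h]
    · simp [h, Ne.symm h]
  rw [hx, EuclideanSpace.norm_single, norm_mul]
  exact mul_le_mul_of_nonneg_left (coord_le_norm x j) (norm_nonneg _)

lemma resolvent_expansion (z t : ℂ) (hz : z ≠ 0) (ht : t - z ≠ 0) (m : ℕ) :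
    (t - z)⁻¹ + ∑ k ∈ Finset.range m, (z ^ (k + 1))⁻¹ * t ^ k
      = t ^ m * (z ^ m)⁻¹ * (t - z)⁻¹ := by
  induction m with
  | zero => simp
  | succ m ih =>
      rw [Finset.sum_range_succ, ← add_assoc, ih]
      field_simp
      ring

theorem herglotz_transform_asymptotic_expansion
    {p : ℕ} (hp : 1 ≤ p) (n : ℕ) (hn : 2 ≤ n)
    (ν : Measure ℝ)
    (W : ℝ → Matrix (Fin p) (Fin p) ℂ)
    (hWmeas : ∀ i j, Measurable (fun t => W t i j))
    (hWpos : ∀ᵐ t ∂ν, (W t).PosSemidef)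
    (hWint : Integrable
      (fun t => (1 + |t| ^ (2 * n - 2)) * ‖Matrix.toEuclideanCLM (𝕜 := ℂ) (W t)‖) ν)
    (H : ℕ → Matrix (Fin p) (Fin p) ℂ)
    (hH : ∀ k < 2 * n - 2, ∀ i j, (∫ t, (t : ℂ) ^ k * W t i j ∂ν) = H k i j)
    (φ : ℂ → Matrix (Fin p) (Fin p) ℂ)
    (hφ : ∀ z : ℂ, 0 < z.im → ∀ i j, φ z i j = ∫ t, ((t : ℂ) - z)⁻¹ * W t i j ∂ν) :
    ∀ δ > (0 : ℝ), ∃ C > (0 : ℝ), ∃ r > (0 : ℝ), ∀ z : ℂ,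
      δ * ‖z‖ ≤ z.im → r ≤ ‖z‖ →
      ‖Matrix.toEuclideanCLM (𝕜 := ℂ)
          (φ z + ∑ k ∈ Finset.range (2 * n - 2), (z ^ (k + 1))⁻¹ • H k)‖ ≤
        C / ‖z‖ ^ (2 * n - 1) := by
  intro δ hδ
  set m := 2 * n - 2 with hm
  have hm1 : 2 * n - 1 = m + 1 := by omega
  set N : ℝ → ℝ := fun t => ‖Matrix.toEuclideanCLM (𝕜 := ℂ) (W t)‖ with hN
  have hNnn : ∀ t, 0 ≤ N t := fun t => norm_nonneg _
  have hpow : ∀ (t : ℝ), ∀ k ≤ m, |t| ^ k ≤ 1 + |t| ^ m := by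
    intro t k hk
    rcases le_total (|t|) 1 with h | h
    · have h1 : |t| ^ k ≤ 1 := pow_le_one₀ (abs_nonneg t) h
      nlinarith [pow_nonneg (abs_nonneg t) m]
    · have h1 : |t| ^ k ≤ |t| ^ m := pow_le_pow_right₀ h hk
      nlinarith
  have hint : ∀ k ≤ m, ∀ i j, Integrable (fun t : ℝ => (t : ℂ) ^ k * W t i j) ν := by
    intro k hk i j
    refine Integrable.mono' hWint
      ((Complex.measurable_ofReal.pow_const k).mul (hWmeas i j)).aestronglyMeasurable ?_
    filter_upwards with t
    rw [norm_mul]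
    have h1 : ‖(t : ℂ) ^ k‖ = |t| ^ k := by
      rw [norm_pow, Complex.norm_real, Real.norm_eq_abs]
    rw [h1]
    exact mul_le_mul (hpow t k hk) (entry_le_opNorm _ i j) (norm_nonneg _) (by positivity)
  set I : ℝ := ∫ t, (1 + |t| ^ m) * N t ∂ν with hI
  have hInn : 0 ≤ I := integral_nonneg fun t => mul_nonneg (by positivity) (hNnn t)
  refine ⟨(p : ℝ) ^ 2 * I / δ + 1, by positivity, 1, one_pos, ?_⟩
  intro z hz1 hz2
  have habs : (0 : ℝ) < ‖z‖ := lt_of_lt_of_le one_pos hz2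
  have him : 0 < z.im := lt_of_lt_of_le (by positivity) hz1
  have hz0 : z ≠ 0 := by
    intro h; rw [h] at him; simp at him
  have htz : ∀ t : ℝ, (t : ℂ) - z ≠ 0 := by
    intro t h
    have h2 : ((t : ℂ) - z).im = 0 := by rw [h]; rfl
    rw [Complex.sub_im, Complex.ofReal_im] at h2
    linarith
  have habsz : ∀ t : ℝ, δ * ‖z‖ ≤ ‖(t : ℂ) - z‖ := by
    intro t
    refine hz1.trans ?_
    have h1 := Complex.abs_im_le_norm ((t : ℂ) - z)
    rw [Complex.sub_im, Complex.ofReal_im, zero_sub, abs_neg, abs_of_pos him] at h1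
    exact h1
  -- pointwise bound on the remainder integrand
  have hb : ∀ (i j : Fin p) (t : ℝ),
      ‖(t : ℂ) ^ m * (z ^ m)⁻¹ * ((t : ℂ) - z)⁻¹ * W t i j‖ ≤
        (δ * ‖z‖ ^ (m + 1))⁻¹ * ((1 + |t| ^ m) * N t) := by
    intro i j t
    have e1 : ‖(t : ℂ) ^ m * (z ^ m)⁻¹ * ((t : ℂ) - z)⁻¹ * W t i j‖ =
        |t| ^ m * (‖z‖ ^ m)⁻¹ * (‖(t : ℂ) - z‖)⁻¹ * ‖W t i j‖ := by
      simp [norm_mul, norm_inv, norm_pow, Complex.norm_real, Real.norm_eq_abs]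
    rw [e1]
    have e2 : (‖(t : ℂ) - z‖)⁻¹ ≤ (δ * ‖z‖)⁻¹ := by
      refine inv_anti₀ (by positivity) (habsz t)
    calc |t| ^ m * (‖z‖ ^ m)⁻¹ * (‖(t : ℂ) - z‖)⁻¹ * ‖W t i j‖
        ≤ (1 + |t| ^ m) * (‖z‖ ^ m)⁻¹ * (δ * ‖z‖)⁻¹ * N t := by
          refine mul_le_mul ?_ (entry_le_opNorm _ i j) (norm_nonneg _) (by positivity)
          refine mul_le_mul ?_ e2 (by positivity) (by positivity)
          exact mul_le_mul_of_nonneg_right (hpow t m le_rfl) (by positivity)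
      _ = (δ * ‖z‖ ^ (m + 1))⁻¹ * ((1 + |t| ^ m) * N t) := by
          rw [pow_succ, mul_inv, mul_inv, mul_inv]
          ring
  -- integrability of the remainder integrand
  have hrem : ∀ i j, Integrable
      (fun t : ℝ => (t : ℂ) ^ m * (z ^ m)⁻¹ * ((t : ℂ) - z)⁻¹ * W t i j) ν := by
    intro i j
    refine Integrable.mono' (hWint.const_mul ((δ * ‖z‖ ^ (m + 1))⁻¹)) ?_
      (Eventually.of_forall (hb i j))
    exact ((((Complex.measurable_ofReal.pow_const m).mul_const _).mul
      ((Complex.measurable_ofReal.sub_const z).inv)).mul (hWmeas i j)).aestronglyMeasurable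
  -- integrability of the resolvent integrand
  have hres : ∀ i j, Integrable (fun t : ℝ => ((t : ℂ) - z)⁻¹ * W t i j) ν := by
    intro i j
    refine Integrable.mono' (hWint.const_mul (z.im)⁻¹)
      (((Complex.measurable_ofReal.sub_const z).inv.mul (hWmeas i j)).aestronglyMeasurable) ?_
    filter_upwards with t
    rw [norm_mul, norm_inv]
    have h1 : (‖(t : ℂ) - z‖)⁻¹ ≤ (z.im)⁻¹ := by
      refine inv_anti₀ him ?_
      have h2 := Complex.abs_im_le_norm ((t : ℂ) - z)
      rw [Complex.sub_im, Complex.ofReal_im, zero_sub, abs_neg, abs_of_pos him] at h2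
      exact h2
    calc (‖(t : ℂ) - z‖)⁻¹ * ‖W t i j‖ ≤ (z.im)⁻¹ * N t := by
          exact mul_le_mul h1 (entry_le_opNorm _ i j) (norm_nonneg _) (by positivity)
      _ ≤ (z.im)⁻¹ * ((1 + |t| ^ m) * N t) := by
          refine mul_le_mul_of_nonneg_left ?_ (by positivity)
          nlinarith [hNnn t, pow_nonneg (abs_nonneg t) m]
  -- the entrywise identity
  have hentry : ∀ i j,
      (φ z + ∑ k ∈ Finset.range m, (z ^ (k + 1))⁻¹ • H k) i j =
        ∫ t, (t : ℂ) ^ m * (z ^ m)⁻¹ * ((t : ℂ) - z)⁻¹ * W t i j ∂ν := by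
    intro i j
    have h1 : (φ z + ∑ k ∈ Finset.range m, (z ^ (k + 1))⁻¹ • H k) i j =
        φ z i j + ∑ k ∈ Finset.range m, (z ^ (k + 1))⁻¹ * H k i j := by
      simp [Matrix.sum_apply]
    rw [h1, hφ z him i j]
    have h2 : ∀ k ∈ Finset.range m, (z ^ (k + 1))⁻¹ * H k i j =
        ∫ t, (z ^ (k + 1))⁻¹ * ((t : ℂ) ^ k * W t i j) ∂ν := by
      intro k hk
      rw [integral_const_mul, hH k (Finset.mem_range.mp hk) i j]
    rw [Finset.sum_congr rfl h2,
      ← integral_finset_sum _ (fun k hk => ((hint k (Finset.mem_range.mp hk).le i j).const_mul _)),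
      ← integral_add (hres i j) (integrable_finset_sum _
        (fun k hk => ((hint k (Finset.mem_range.mp hk).le i j).const_mul _)))]
    refine integral_congr_ae (Eventually.of_forall fun t => ?_)
    have hkey := resolvent_expansion z (t : ℂ) hz0 (htz t) m
    calc ((t : ℂ) - z)⁻¹ * W t i j + ∑ k ∈ Finset.range m, (z ^ (k + 1))⁻¹ * ((t : ℂ) ^ k * W t i j)
        = (((t : ℂ) - z)⁻¹ + ∑ k ∈ Finset.range m, (z ^ (k + 1))⁻¹ * (t : ℂ) ^ k) * W t i j := by
          rw [add_mul, Finset.sum_mul]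
          simp [mul_assoc]
      _ = (t : ℂ) ^ m * (z ^ m)⁻¹ * ((t : ℂ) - z)⁻¹ * W t i j := by rw [hkey]
  -- per-entry norm bound
  have hbound : ∀ i j,
      ‖(φ z + ∑ k ∈ Finset.range m, (z ^ (k + 1))⁻¹ • H k) i j‖ ≤
        (δ * ‖z‖ ^ (m + 1))⁻¹ * I := by
    intro i j
    rw [hentry i j]
    refine (norm_integral_le_of_norm_le (hWint.const_mul ((δ * ‖z‖ ^ (m + 1))⁻¹))
      (Eventually.of_forall (hb i j))).trans_eq ?_
    rw [integral_const_mul]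
  -- assemble
  calc ‖Matrix.toEuclideanCLM (𝕜 := ℂ)
        (φ z + ∑ k ∈ Finset.range m, (z ^ (k + 1))⁻¹ • H k)‖
      ≤ ∑ i, ∑ j, ‖(φ z + ∑ k ∈ Finset.range m, (z ^ (k + 1))⁻¹ • H k) i j‖ :=
        opNorm_le_sum_entries _
    _ ≤ ∑ _i : Fin p, ∑ _j : Fin p, (δ * ‖z‖ ^ (m + 1))⁻¹ * I := by
        exact Finset.sum_le_sum fun i _ => Finset.sum_le_sum fun j _ => hbound i j
    _ = (p : ℝ) ^ 2 * ((δ * ‖z‖ ^ (m + 1))⁻¹ * I) := by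
        rw [Finset.sum_const, Finset.sum_const, Finset.card_univ, Fintype.card_fin,
          nsmul_eq_mul, nsmul_eq_mul]
        ring
    _ = ((p : ℝ) ^ 2 * I / δ) / ‖z‖ ^ (m + 1) := by
        field_simp
    _ ≤ ((p : ℝ) ^ 2 * I / δ + 1) / ‖z‖ ^ (2 * n - 1) := by
        rw [hm1]
        gcongr
        linarith
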